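/- arXiv:0907.3990 — 2 statements merged into one kernel-verified Lean document; each statement's English description precedes it below -/
import Mathlib

section
/- For any t ∈ ℂ, λ₁(ξ), λ₂(ξ) ∈ ℂ[ξ] and p₁(z), p₂(z) ∈ ℂ[z], we have (λ₁(ξ)p₁(z)) ∗_t (λ₂(ξ)p₂(z)) = (λ₁(ξ) ∗_t p₂(z))·(λ₂(ξ) ∗_t p₁(z)), where the product on the right-hand side is the usual polynomial product. -/
open MvPolynomial

noncomputable section

/-- ℂ[ξ,z] in 2n variables: `Sum.inl i` is ξᵢ, `Sum.inr i` is zᵢ. -/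
abbrev P (n : ℕ) := MvPolynomial (Fin n ⊕ Fin n) ℂ

variable {n : ℕ}

/-- ∂ᵢ = ∂/∂zᵢ -/
def dz (i : Fin n) : Module.End ℂ (P n) := (pderiv (Sum.inr i)).toLinearMap
/-- δᵢ = ∂/∂ξᵢ -/
def dxi (i : Fin n) : Module.End ℂ (P n) := (pderiv (Sum.inl i)).toLinearMap
/-- ∂^α (the factors pairwise commute, so the ordered product is the mathematical one) -/
def Dz (α : Fin n → ℕ) : Module.End ℂ (P n) := (List.ofFn (fun i => dz i ^ α i)).prod
/-- δ^α -/
def Dxi (α : Fin n → ℕ) : Module.End ℂ (P n) := (List.ofFn (fun i => dxi i ^ α i)).prod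
/-- |α| -/
def mdeg (α : Fin n → ℕ) : ℕ := ∑ i, α i
/-- α! -/
def mfact (α : Fin n → ℕ) : ℕ := ∏ i, (α i).factorial

/-- The deformed product `f ∗_t g = Σ_{α,β} ((-t)^{|α|+|β|}/(α!β!)) (δ^β ∂^α f)(∂^β δ^α g)`. -/
def astar (t : ℂ) (f g : P n) : P n :=
  ∑ᶠ (α : Fin n → ℕ), ∑ᶠ (β : Fin n → ℕ),
    ((-t) ^ (mdeg α + mdeg β) / ((mfact α : ℂ) * (mfact β : ℂ))) •
      (Dxi β (Dz α f) * Dz β (Dxi α g))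

/-- Λ = Σᵢ δᵢ∂ᵢ -/
def Lam : Module.End ℂ (P n) := ∑ i, dxi i * dz i
/-- Φ_t = e^{tΛ} -/
def Phi (t : ℂ) (f : P n) : P n := ∑ᶠ m : ℕ, (t ^ m / (m.factorial : ℂ)) • ((Lam ^ m) f)

def xiv (i : Fin n) : P n := X (Sum.inl i)
def zv (i : Fin n) : P n := X (Sum.inr i)
def XiPow (α : Fin n → ℕ) : P n := ∏ i, xiv i ^ α i
def ZPow' (α : Fin n → ℕ) : P n := ∏ i, zv i ^ α i
def mulXi (i : Fin n) : Module.End ℂ (P n) := LinearMap.mulLeft ℂ (xiv i)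
def mulZ (i : Fin n) : Module.End ℂ (P n) := LinearMap.mulLeft ℂ (zv i)

/-- λ(ξ): the image of λ ∈ ℂ[ξ] in ℂ[ξ,z] -/
def ofXi (l : MvPolynomial (Fin n) ℂ) : P n := rename Sum.inl l
/-- p(z): the image of p ∈ ℂ[z] in ℂ[ξ,z] -/
def ofZ (p : MvPolynomial (Fin n) ℂ) : P n := rename Sum.inr p


section Helpers

variable {n : ℕ}

lemma dz_apply (i : Fin n) (x : P n) : dz i x = pderiv (Sum.inr i) x := rfl
lemma dxi_apply (i : Fin n) (x : P n) : dxi i x = pderiv (Sum.inl i) x := rfl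

/-- shifted total degree: 0 iff the polynomial is 0 -/
def nd (x : P n) : ℕ := if x = 0 then 0 else x.totalDegree + 1

lemma eq_zero_of_nd_le_zero {x : P n} (h : nd x ≤ 0) : x = 0 := by
  by_contra hx; simp [nd, hx] at h

lemma pderiv_eq_zero_of_deg0 (j : Fin n ⊕ Fin n) {x : P n} (h : x.totalDegree = 0) :
    pderiv j x = 0 := by
  conv_lhs => rw [x.as_sum]
  rw [map_sum]
  refine Finset.sum_eq_zero fun s hs => ?_
  rw [pderiv_monomial]
  have hs0 := (totalDegree_eq_zero_iff _ x).mp h s hs j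
  simp [hs0]

lemma totalDegree_pderiv_le (j : Fin n ⊕ Fin n) {x : P n} {d : ℕ} (h : x.totalDegree ≤ d + 1) :
    (pderiv j x).totalDegree ≤ d := by
  conv_lhs => rw [x.as_sum]
  rw [map_sum]
  refine totalDegree_finsetSum_le fun s hs => ?_
  rw [pderiv_monomial]
  by_cases h0 : s j = 0
  · simp [h0]
  · refine (totalDegree_monomial_le _ _).trans ?_
    have hle : Finsupp.single j 1 ≤ s :=
      Finsupp.single_le_iff.mpr (Nat.one_le_iff_ne_zero.mpr h0)
    have hs' : (s.sum fun _ e => e) ≤ d + 1 := le_trans (le_totalDegree hs) h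
    rw [← tsub_add_cancel_of_le hle,
      Finsupp.sum_add_index' (fun _ => rfl) (fun _ _ _ => rfl),
      Finsupp.sum_single_index rfl] at hs'
    simp only [Finsupp.sum, id_eq, Function.id_def] at hs' ⊢
    omega

lemma nd_pderiv (j : Fin n ⊕ Fin n) (x : P n) (d : ℕ) (h : nd x ≤ d + 1) :
    nd (pderiv j x) ≤ d := by
  by_cases hp : pderiv j x = 0
  · simp [nd, hp]
  · have hx : x ≠ 0 := by rintro rfl; simp at hp
    have hdeg : x.totalDegree ≤ d := by simpa [nd, hx] using h
    have hd0 : x.totalDegree ≠ 0 := fun h0 => hp (pderiv_eq_zero_of_deg0 j h0)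
    have h1 : (pderiv j x).totalDegree ≤ x.totalDegree - 1 :=
      totalDegree_pderiv_le j (by omega)
    simp only [nd, if_neg hp]
    omega

lemma nd_pow_le {e : Module.End ℂ (P n)} (he : ∀ x d, nd x ≤ d + 1 → nd (e x) ≤ d) :
    ∀ (k : ℕ) (x : P n) (d : ℕ), nd x ≤ d + k → nd ((e ^ k) x) ≤ d := by
  intro k
  induction k with
  | zero => intro x d h; simpa using h
  | succ k ih =>
    intro x d h
    rw [pow_succ, Module.End.mul_apply]
    exact ih _ _ (he x (d + k) (by omega))

lemma nd_listprod :
    ∀ (L : List (Module.End ℂ (P n) × ℕ)),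
      (∀ p ∈ L, ∀ x d, nd x ≤ d + p.2 → nd (p.1 x) ≤ d) →
      ∀ x d, nd x ≤ d + (L.map Prod.snd).sum → nd ((L.map Prod.fst).prod x) ≤ d := by
  intro L
  induction L with
  | nil => intro _ x d h; simpa using h
  | cons p L ih =>
    intro hL x d h
    rw [List.map_cons, List.prod_cons, Module.End.mul_apply]
    refine hL p (List.mem_cons_self) _ d ?_
    refine ih (fun q hq => hL q (List.mem_cons_of_mem _ hq)) x (d + p.2) ?_
    simp only [List.map_cons, List.sum_cons] at h
    omega

lemma Dxi_eq_zero_of_nd_le {β : Fin n → ℕ} {x : P n} (h : nd x ≤ mdeg β) : Dxi β x = 0 := by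
  have hD : Dxi β = ((List.ofFn fun i => (dxi i ^ β i, β i)).map Prod.fst).prod := by
    rw [List.map_ofFn]; rfl
  have hsum : ((List.ofFn fun i => (dxi i ^ β i, β i)).map Prod.snd).sum = mdeg β := by
    rw [List.map_ofFn]
    show (List.ofFn fun i => β i).sum = _
    rw [List.sum_ofFn]; rfl
  refine eq_zero_of_nd_le_zero ?_
  rw [hD]
  refine nd_listprod _ ?_ x 0 (by rw [hsum]; simpa using h)
  intro p hp
  obtain ⟨i, rfl⟩ := (List.mem_ofFn.mp hp)
  exact nd_pow_le (nd_pderiv (Sum.inl i)) (β i)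

lemma Dz_eq_zero_of_nd_le {β : Fin n → ℕ} {x : P n} (h : nd x ≤ mdeg β) : Dz β x = 0 := by
  have hD : Dz β = ((List.ofFn fun i => (dz i ^ β i, β i)).map Prod.fst).prod := by
    rw [List.map_ofFn]; rfl
  have hsum : ((List.ofFn fun i => (dz i ^ β i, β i)).map Prod.snd).sum = mdeg β := by
    rw [List.map_ofFn]
    show (List.ofFn fun i => β i).sum = _
    rw [List.sum_ofFn]; rfl
  refine eq_zero_of_nd_le_zero ?_
  rw [hD]
  refine nd_listprod _ ?_ x 0 (by rw [hsum]; simpa using h)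
  intro p hp
  obtain ⟨i, rfl⟩ := (List.mem_ofFn.mp hp)
  exact nd_pow_le (nd_pderiv (Sum.inr i)) (β i)

/- invariance lemmas -/

lemma endPow_mem {S : Set (P n)} {e : Module.End ℂ (P n)} (he : ∀ x ∈ S, e x ∈ S) :
    ∀ (k : ℕ), ∀ x ∈ S, (e ^ k) x ∈ S := by
  intro k
  induction k with
  | zero => intro x hx; simpa using hx
  | succ k ih =>
    intro x hx
    rw [pow_succ, Module.End.mul_apply]
    exact ih _ (he x hx)

lemma endProd_mem {S : Set (P n)} :
    ∀ (L : List (Module.End ℂ (P n))), (∀ e ∈ L, ∀ x ∈ S, e x ∈ S) →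
      ∀ x ∈ S, L.prod x ∈ S := by
  intro L
  induction L with
  | nil => intro _ x hx; simpa using hx
  | cons e L ih =>
    intro hL x hx
    rw [List.prod_cons, Module.End.mul_apply]
    exact hL e (List.mem_cons_self) _
      (ih (fun e' h' => hL e' (List.mem_cons_of_mem _ h')) x hx)

lemma endProd_eq_zero {S : Set (P n)} :
    ∀ (L : List (Module.End ℂ (P n))), (∀ e ∈ L, ∀ x ∈ S, e x ∈ S) →
      ∀ e₀ ∈ L, (∀ x ∈ S, e₀ x = 0) → ∀ x ∈ S, L.prod x = 0 := by
  intro L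
  induction L with
  | nil => intro _ e₀ h; simp at h
  | cons e L ih =>
    intro hL e₀ h₀ hz x hx
    rw [List.prod_cons, Module.End.mul_apply]
    have hL' : ∀ e' ∈ L, ∀ x ∈ S, e' x ∈ S :=
      fun e' h' => hL e' (List.mem_cons_of_mem _ h')
    rcases List.mem_cons.mp h₀ with rfl | hmem
    · exact hz _ (endProd_mem L hL' x hx)
    · rw [ih hL' e₀ hmem hz x hx, map_zero]

lemma endPow_mulLeft {x : P n} {e : Module.End ℂ (P n)} (he : ∀ y, e (x * y) = x * e y) :
    ∀ (k : ℕ) (y : P n), (e ^ k) (x * y) = x * (e ^ k) y := by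
  intro k
  induction k with
  | zero => intro y; simp
  | succ k ih =>
    intro y
    rw [pow_succ', Module.End.mul_apply, Module.End.mul_apply, ih, he]

lemma endProd_mulLeft {x : P n} :
    ∀ (L : List (Module.End ℂ (P n))), (∀ e ∈ L, ∀ y, e (x * y) = x * e y) →
      ∀ y, L.prod (x * y) = x * L.prod y := by
  intro L
  induction L with
  | nil => intro _ y; simp
  | cons e L ih =>
    intro hL y
    rw [List.prod_cons, Module.End.mul_apply,
      ih (fun e' h' => hL e' (List.mem_cons_of_mem _ h')) y,
      hL e (List.mem_cons_self) _, Module.End.mul_apply]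

/- specific facts about ofXi / ofZ -/

lemma dz_ofXi (i : Fin n) (l : MvPolynomial (Fin n) ℂ) : dz i (ofXi l) = 0 := by
  classical
  rw [dz_apply, ofXi]
  refine pderiv_eq_zero_of_notMem_vars ?_
  intro h
  obtain ⟨j, -, hj⟩ := Finset.mem_image.mp (vars_rename _ _ h)
  exact Sum.inl_ne_inr hj

lemma dxi_ofZ (i : Fin n) (p : MvPolynomial (Fin n) ℂ) : dxi i (ofZ p) = 0 := by
  classical
  rw [dxi_apply, ofZ]
  refine pderiv_eq_zero_of_notMem_vars ?_
  intro h
  obtain ⟨j, -, hj⟩ := Finset.mem_image.mp (vars_rename _ _ h)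
  exact Sum.inr_ne_inl hj

lemma dxi_ofXi (i : Fin n) (l : MvPolynomial (Fin n) ℂ) :
    dxi i (ofXi l) = ofXi (pderiv i l) := by
  rw [dxi_apply, ofXi, ofXi]
  exact pderiv_rename Sum.inl_injective i l

lemma dz_ofZ (i : Fin n) (p : MvPolynomial (Fin n) ℂ) :
    dz i (ofZ p) = ofZ (pderiv i p) := by
  rw [dz_apply, ofZ, ofZ]
  exact pderiv_rename Sum.inr_injective i p

lemma Txi_mem_dxi (i : Fin n) : ∀ x ∈ Set.range (ofXi (n := n)), dxi i x ∈ Set.range ofXi := by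
  rintro x ⟨l, rfl⟩; exact ⟨pderiv i l, (dxi_ofXi i l).symm⟩

lemma Txi_mem_dz (i : Fin n) : ∀ x ∈ Set.range (ofXi (n := n)), dz i x ∈ Set.range ofXi := by
  rintro x ⟨l, rfl⟩; exact ⟨0, by rw [dz_ofXi]; simp [ofXi]⟩

lemma Tz_mem_dz (i : Fin n) : ∀ x ∈ Set.range (ofZ (n := n)), dz i x ∈ Set.range ofZ := by
  rintro x ⟨p, rfl⟩; exact ⟨pderiv i p, (dz_ofZ i p).symm⟩

lemma Tz_mem_dxi (i : Fin n) : ∀ x ∈ Set.range (ofZ (n := n)), dxi i x ∈ Set.range ofZ := by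
  rintro x ⟨p, rfl⟩; exact ⟨0, by rw [dxi_ofZ]; simp [ofZ]⟩

lemma Dz_mem_Tz (α : Fin n → ℕ) {x : P n} (hx : x ∈ Set.range (ofZ (n := n))) :
    Dz α x ∈ Set.range ofZ := by
  refine endProd_mem _ ?_ x hx
  intro e he
  obtain ⟨i, rfl⟩ := (List.mem_ofFn.mp he)
  exact endPow_mem (Tz_mem_dz i) (α i)

lemma Dxi_mem_Txi (α : Fin n → ℕ) {x : P n} (hx : x ∈ Set.range (ofXi (n := n))) :
    Dxi α x ∈ Set.range ofXi := by
  refine endProd_mem _ ?_ x hx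
  intro e he
  obtain ⟨i, rfl⟩ := (List.mem_ofFn.mp he)
  exact endPow_mem (Txi_mem_dxi i) (α i)

lemma Dz_ofXi_eq_zero {α : Fin n → ℕ} (hα : α ≠ 0) (l : MvPolynomial (Fin n) ℂ) :
    Dz α (ofXi l) = 0 := by
  obtain ⟨j, hj⟩ := Function.ne_iff.mp hα
  have hj' : α j ≠ 0 := by simpa using hj
  have hz : ∀ x ∈ Set.range (ofXi (n := n)), (dz j ^ α j) x = 0 := by
    intro x hx
    obtain ⟨k, hk⟩ : ∃ k, α j = k + 1 := ⟨α j - 1, by omega⟩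
    obtain ⟨l', rfl⟩ := hx
    rw [hk, pow_succ, Module.End.mul_apply, dz_ofXi, map_zero]
  refine endProd_eq_zero _ ?_ (dz j ^ α j) ?_ hz (ofXi l) ⟨l, rfl⟩
  · intro e he
    obtain ⟨i, rfl⟩ := (List.mem_ofFn.mp he)
    exact endPow_mem (Txi_mem_dz i) (α i)
  · exact List.mem_ofFn.mpr ⟨j, rfl⟩

lemma Dz_zero : Dz (0 : Fin n → ℕ) = 1 := by
  simp [Dz, List.ofFn_const, List.prod_replicate]

lemma Dxi_zero : Dxi (0 : Fin n → ℕ) = 1 := by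
  simp [Dxi, List.ofFn_const, List.prod_replicate]

lemma mdeg_zero : mdeg (0 : Fin n → ℕ) = 0 := by simp [mdeg]

lemma mfact_zero : mfact (0 : Fin n → ℕ) = 1 := by simp [mfact]

lemma Dz_mul_left {x : P n} (hx : ∀ i, dz i x = 0) (α : Fin n → ℕ) (y : P n) :
    Dz α (x * y) = x * Dz α y := by
  refine endProd_mulLeft _ ?_ y
  intro e he
  obtain ⟨i, rfl⟩ := (List.mem_ofFn.mp he)
  refine endPow_mulLeft ?_ (α i)
  intro y'
  have hx' : ∀ i, pderiv (Sum.inr i) x = 0 := fun i => hx i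
  simp only [dz_apply]
  rw [pderiv_mul, hx' i, zero_mul, zero_add]

lemma Dxi_mul_left {x : P n} (hx : ∀ i, dxi i x = 0) (α : Fin n → ℕ) (y : P n) :
    Dxi α (x * y) = x * Dxi α y := by
  refine endProd_mulLeft _ ?_ y
  intro e he
  obtain ⟨i, rfl⟩ := (List.mem_ofFn.mp he)
  refine endPow_mulLeft ?_ (α i)
  intro y'
  have hx' : ∀ i, pderiv (Sum.inl i) x = 0 := fun i => hx i
  simp only [dxi_apply]
  rw [pderiv_mul, hx' i, zero_mul, zero_add]

lemma Dxi_mul_right {y : P n} (hy : ∀ i, dxi i y = 0) (α : Fin n → ℕ) (x : P n) :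
    Dxi α (x * y) = Dxi α x * y := by
  rw [mul_comm x y, Dxi_mul_left hy, mul_comm]

lemma Dz_mul_right {y : P n} (hy : ∀ i, dz i y = 0) (α : Fin n → ℕ) (x : P n) :
    Dz α (x * y) = Dz α x * y := by
  rw [mul_comm x y, Dz_mul_left hy, mul_comm]

/- support finiteness -/

lemma support_finite (l q : MvPolynomial (Fin n) ℂ) (c : (Fin n → ℕ) → ℂ) :
    (Function.support fun β => c β • (Dxi β (ofXi l) * Dz β (ofZ q))).Finite := by
  refine Set.Finite.subset (Set.finite_Icc (0 : Fin n → ℕ) (fun _ => nd (ofXi l))) ?_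
  intro β hβ
  have hne : Dxi β (ofXi l) ≠ 0 := by
    intro h0
    apply hβ
    simp [Function.mem_support, h0]
  have hlt : ¬ nd (ofXi l) ≤ mdeg β := fun h => hne (Dxi_eq_zero_of_nd_le h)
  constructor
  · intro i; exact Nat.zero_le _
  · intro i
    have : β i ≤ mdeg β := Finset.single_le_sum (fun j _ => Nat.zero_le (β j)) (Finset.mem_univ i)
    simp only []
    omega

end Helpers

lemma astar_xi_z (t : ℂ) (l q : MvPolynomial (Fin n) ℂ) :
    astar t (ofXi l) (ofZ q) =
      ∑ᶠ β : Fin n → ℕ, ((-t) ^ mdeg β / (mfact β : ℂ)) • (Dxi β (ofXi l) * Dz β (ofZ q)) := by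
  rw [astar]
  rw [finsum_eq_single _ (0 : Fin n → ℕ) ?_]
  · refine finsum_congr fun β => ?_
    rw [Dz_zero, Dxi_zero, Module.End.one_apply, Module.End.one_apply, mdeg_zero, mfact_zero]
    norm_num
  · intro α hα
    refine (finsum_congr fun β => ?_).trans finsum_zero
    rw [Dz_ofXi_eq_zero hα, map_zero, zero_mul, smul_zero]

/-- (λ₁(ξ)p₁(z)) ∗_t (λ₂(ξ)p₂(z)) = (λ₁(ξ) ∗_t p₂(z))·(λ₂(ξ) ∗_t p₁(z)). -/
theorem astar_symmetry (n : ℕ) (t : ℂ) (l₁ l₂ p₁ p₂ : MvPolynomial (Fin n) ℂ) :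
    astar t (ofXi l₁ * ofZ p₁) (ofXi l₂ * ofZ p₂) =
      astar t (ofXi l₁) (ofZ p₂) * astar t (ofXi l₂) (ofZ p₁) := by
  classical
  have hgfin : (Function.support fun β : Fin n → ℕ =>
      ((-t) ^ mdeg β / (mfact β : ℂ)) • (Dxi β (ofXi l₁) * Dz β (ofZ p₂))).Finite :=
    support_finite l₁ p₂ _
  have hhfin : (Function.support fun α : Fin n → ℕ =>
      ((-t) ^ mdeg α / (mfact α : ℂ)) • (Dxi α (ofXi l₂) * Dz α (ofZ p₁))).Finite :=
    support_finite l₂ p₁ _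
  have hterm : ∀ α β : Fin n → ℕ,
      ((-t) ^ (mdeg α + mdeg β) / ((mfact α : ℂ) * (mfact β : ℂ))) •
        (Dxi β (Dz α (ofXi l₁ * ofZ p₁)) * Dz β (Dxi α (ofXi l₂ * ofZ p₂))) =
      (((-t) ^ mdeg β / (mfact β : ℂ)) • (Dxi β (ofXi l₁) * Dz β (ofZ p₂))) *
      (((-t) ^ mdeg α / (mfact α : ℂ)) • (Dxi α (ofXi l₂) * Dz α (ofZ p₁))) := by
    intro α β
    have e1 : Dz α (ofXi l₁ * ofZ p₁) = ofXi l₁ * Dz α (ofZ p₁) :=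
      Dz_mul_left (fun i => dz_ofXi i l₁) α _
    have hBz : ∀ i, dxi i (Dz α (ofZ p₁)) = 0 := by
      intro i
      obtain ⟨q, hq⟩ := Dz_mem_Tz α ⟨p₁, rfl⟩
      rw [← hq, dxi_ofZ]
    have e2 : Dxi β (ofXi l₁ * Dz α (ofZ p₁)) = Dxi β (ofXi l₁) * Dz α (ofZ p₁) :=
      Dxi_mul_right hBz β _
    have e3 : Dxi α (ofXi l₂ * ofZ p₂) = Dxi α (ofXi l₂) * ofZ p₂ :=
      Dxi_mul_right (fun i => dxi_ofZ i p₂) α _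
    have hC : ∀ i, dz i (Dxi α (ofXi l₂)) = 0 := by
      intro i
      obtain ⟨l', hl'⟩ := Dxi_mem_Txi α ⟨l₂, rfl⟩
      rw [← hl', dz_ofXi]
    have e4 : Dz β (Dxi α (ofXi l₂) * ofZ p₂) = Dxi α (ofXi l₂) * Dz β (ofZ p₂) :=
      Dz_mul_left hC β _
    have hc : ((-t) ^ (mdeg α + mdeg β) / ((mfact α : ℂ) * (mfact β : ℂ))) =
        ((-t) ^ mdeg β / (mfact β : ℂ)) * ((-t) ^ mdeg α / (mfact α : ℂ)) := by
      rw [div_mul_div_comm, ← pow_add, add_comm (mdeg β) (mdeg α),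
        mul_comm ((mfact β : ℂ)) ((mfact α : ℂ))]
    rw [e1, e2, e3, e4, smul_mul_smul_comm, ← hc]
    congr 1
    ring
  rw [astar_xi_z, astar_xi_z, astar]
  calc
    (∑ᶠ α : Fin n → ℕ, ∑ᶠ β : Fin n → ℕ,
        ((-t) ^ (mdeg α + mdeg β) / ((mfact α : ℂ) * (mfact β : ℂ))) •
          (Dxi β (Dz α (ofXi l₁ * ofZ p₁)) * Dz β (Dxi α (ofXi l₂ * ofZ p₂))))
      = ∑ᶠ α : Fin n → ℕ,
          (∑ᶠ β : Fin n → ℕ,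
            ((-t) ^ mdeg β / (mfact β : ℂ)) • (Dxi β (ofXi l₁) * Dz β (ofZ p₂))) *
          (((-t) ^ mdeg α / (mfact α : ℂ)) • (Dxi α (ofXi l₂) * Dz α (ofZ p₁))) := by
        refine finsum_congr fun α => ?_
        rw [finsum_mul' _ _ hgfin]
        exact finsum_congr fun β => hterm α β
    _ = (∑ᶠ β : Fin n → ℕ,
            ((-t) ^ mdeg β / (mfact β : ℂ)) • (Dxi β (ofXi l₁) * Dz β (ofZ p₂))) *
        (∑ᶠ α : Fin n → ℕ,
            ((-t) ^ mdeg α / (mfact α : ℂ)) • (Dxi α (ofXi l₂) * Dz α (ofZ p₁))) :=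
      (mul_finsum' _ _ hhfin).symm
end
end

section
/- For k, m ∈ ℕ, the one-variable generalized Laguerre polynomial satisfies ξ^k·L_m^{[k]}(ξz) = ((-1)^m/m!)·(ξ^{m+k} ∗ z^m) and z^k·L_m^{[k]}(ξz) = ((-1)^m/m!)·(ξ^m ∗ z^{m+k}) in ℂ[ξ,z], where ∗ = ∗_{t=1}. -/
open MvPolynomial

noncomputable section

variable {n : ℕ}

/-- The generalized Laguerre polynomial L_m^{[k]}(z) = Σ_{j=0}^m C(m+k, m-j)(-z)^j/j!. -/
def glaguerre (k m : ℕ) : Polynomial ℂ :=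
  ∑ j ∈ Finset.range (m + 1),
    Polynomial.C (((m + k).choose (m - j) : ℂ) * (-1) ^ j / (j.factorial : ℂ)) *
      Polynomial.X ^ j

-- auxiliary lemmas

lemma dz_xiv_pow (a : ℕ) : dz (0 : Fin 1) ((xiv 0 : P 1) ^ a) = 0 := by
  simp [dz, xiv, pderiv_pow, pderiv_X_of_ne (by simp : (Sum.inl 0 : Fin 1 ⊕ Fin 1) ≠ Sum.inr 0)]

lemma dxi_zv_pow (b : ℕ) : dxi (0 : Fin 1) ((zv 0 : P 1) ^ b) = 0 := by
  simp [dxi, zv, pderiv_pow, pderiv_X_of_ne (by simp : (Sum.inr 0 : Fin 1 ⊕ Fin 1) ≠ Sum.inl 0)]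

lemma dz_pow_xiv (c a : ℕ) (hc : c ≠ 0) : (dz (0:Fin 1) ^ c) ((xiv 0 : P 1) ^ a) = 0 := by
  obtain ⟨c, rfl⟩ := Nat.exists_eq_succ_of_ne_zero hc
  rw [pow_succ, Module.End.mul_apply, dz_xiv_pow, map_zero]

lemma dxi_pow_zv (c b : ℕ) (hc : c ≠ 0) : (dxi (0:Fin 1) ^ c) ((zv 0 : P 1) ^ b) = 0 := by
  obtain ⟨c, rfl⟩ := Nat.exists_eq_succ_of_ne_zero hc
  rw [pow_succ, Module.End.mul_apply, dxi_zv_pow, map_zero]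

lemma dxi_pow_xiv (c a : ℕ) :
    (dxi (0:Fin 1) ^ c) ((xiv 0 : P 1) ^ a) = (a.descFactorial c : ℂ) • (xiv 0) ^ (a - c) := by
  induction c with
  | zero => simp
  | succ c ih =>
    rw [pow_succ', Module.End.mul_apply, ih, map_smul]
    have : dxi (0:Fin 1) ((xiv 0 : P 1) ^ (a - c)) = ((a - c : ℕ) : ℂ) • (xiv 0) ^ (a - (c+1)) := by
      simp [dxi, xiv, pderiv_pow, pderiv_X_self, Nat.sub_sub, smul_eq_C_mul]
    rw [this, smul_smul, Nat.descFactorial_succ]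
    push_cast
    ring_nf

lemma dz_pow_zv (c b : ℕ) :
    (dz (0:Fin 1) ^ c) ((zv 0 : P 1) ^ b) = (b.descFactorial c : ℂ) • (zv 0) ^ (b - c) := by
  induction c with
  | zero => simp
  | succ c ih =>
    rw [pow_succ', Module.End.mul_apply, ih, map_smul]
    have : dz (0:Fin 1) ((zv 0 : P 1) ^ (b - c)) = ((b - c : ℕ) : ℂ) • (zv 0) ^ (b - (c+1)) := by
      simp [dz, zv, pderiv_pow, pderiv_X_self, Nat.sub_sub, smul_eq_C_mul]
    rw [this, smul_smul, Nat.descFactorial_succ]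
    push_cast
    ring_nf

lemma Dz_one (α : Fin 1 → ℕ) : Dz α = dz 0 ^ α 0 := by
  simp [Dz, List.ofFn_succ]

lemma Dxi_one (α : Fin 1 → ℕ) : Dxi α = dxi 0 ^ α 0 := by
  simp [Dxi, List.ofFn_succ]

lemma mdeg_one (α : Fin 1 → ℕ) : mdeg α = α 0 := by simp [mdeg]
lemma mfact_one (α : Fin 1 → ℕ) : mfact α = (α 0).factorial := by simp [mfact]

lemma astar_pow (a b : ℕ) :
    astar 1 ((xiv 0 : P 1) ^ a) ((zv 0) ^ b) =
      ∑ c ∈ Finset.range (min a b + 1),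
        ((-1 : ℂ) ^ c / (c.factorial : ℂ) * (a.descFactorial c : ℂ) * (b.descFactorial c : ℂ)) •
          ((xiv 0) ^ (a - c) * (zv 0) ^ (b - c)) := by
  rw [astar]
  rw [finsum_eq_single _ (0 : Fin 1 → ℕ)]
  · have h0 : ∀ β : Fin 1 → ℕ,
        ((-(1:ℂ)) ^ (mdeg (0 : Fin 1 → ℕ) + mdeg β) / ((mfact (0:Fin 1 → ℕ) : ℂ) * (mfact β : ℂ))) •
          (Dxi β (Dz 0 ((xiv 0 : P 1) ^ a)) * Dz β (Dxi 0 ((zv 0 : P 1) ^ b))) =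
        ((-1 : ℂ) ^ (β 0) / ((β 0).factorial : ℂ) * (a.descFactorial (β 0) : ℂ)
            * (b.descFactorial (β 0) : ℂ)) •
          ((xiv 0) ^ (a - β 0) * (zv 0) ^ (b - β 0)) := by
      intro β
      rw [Dz_one, Dxi_one, Dz_one, Dxi_one, mdeg_one, mdeg_one, mfact_one, mfact_one]
      simp only [Pi.zero_apply, pow_zero, Module.End.one_apply, Nat.factorial_zero, Nat.cast_one,
        one_mul, zero_add]
      rw [dxi_pow_xiv, dz_pow_zv, smul_mul_smul_comm, smul_smul]
      ring_nf
  -- turn the finsum over (Fin 1 → ℕ) into a finsum over ℕ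
    simp only [h0]
    have he := finsum_comp_equiv (Equiv.funUnique (Fin 1) ℕ).symm
      (f := fun β : Fin 1 → ℕ =>
        ((-1 : ℂ) ^ (β 0) / ((β 0).factorial : ℂ) * (a.descFactorial (β 0) : ℂ)
            * (b.descFactorial (β 0) : ℂ)) •
          ((xiv 0 : P 1) ^ (a - β 0) * (zv 0) ^ (b - β 0)))
    rw [← he]
    have : ∀ c : ℕ, ((Equiv.funUnique (Fin 1) ℕ).symm c) 0 = c := fun c => rfl
    simp only [this]
    apply finsum_eq_sum_of_support_subset
    intro c hc
    simp only [Function.mem_support] at hc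
    simp only [Finset.coe_range, Set.mem_Iio, Nat.lt_succ_iff]
    by_contra h
    push_neg at h
    rcases Nat.lt_or_ge a b with hab | hab
    · have : a.descFactorial c = 0 := Nat.descFactorial_eq_zero_iff_lt.2 (by omega)
      simp [this] at hc
    · have : b.descFactorial c = 0 := Nat.descFactorial_eq_zero_iff_lt.2 (by omega)
      simp [this] at hc
  · intro α hα
    have hα0 : α 0 ≠ 0 := by
      intro h; apply hα; funext i; fin_cases i; exact h
    apply finsum_eq_zero_of_forall_eq_zero
    intro β
    rw [Dz_one, Dxi_one, Dz_one, Dxi_one, dz_pow_xiv _ _ hα0, dxi_pow_zv _ _ hα0]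
    simp

lemma scalar_key (j d k : ℕ) :
    (((j + d + k).choose d : ℂ) * (-1) ^ j / (j.factorial : ℂ)) =
      ((-1 : ℂ) ^ (j + d) / ((j + d).factorial : ℂ)) *
        ((-1 : ℂ) ^ d / (d.factorial : ℂ) * ((j + d + k).descFactorial d : ℂ) *
          ((j + d).descFactorial d : ℂ)) := by
  have h1 : ((j + d + k).descFactorial d : ℂ) = (d.factorial : ℂ) * ((j + d + k).choose d) := by
    exact_mod_cast congrArg (Nat.cast : ℕ → ℂ) (Nat.descFactorial_eq_factorial_mul_choose _ _)
  have h2 : ((j + d).factorial : ℂ) = (j.factorial : ℂ) * ((j + d).descFactorial d : ℂ) := by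
    have h := Nat.factorial_mul_descFactorial (Nat.le_add_left d j)
    rw [Nat.add_sub_cancel] at h
    exact_mod_cast h.symm
  have hd2 : ((j + d).descFactorial d : ℂ) ≠ 0 := by
    exact_mod_cast Nat.cast_ne_zero.2 (fun h =>
      absurd (Nat.descFactorial_eq_zero_iff_lt.1 h) (by omega))
  have hj : (j.factorial : ℂ) ≠ 0 := Nat.cast_ne_zero.2 j.factorial_ne_zero
  have hd : (d.factorial : ℂ) ≠ 0 := Nat.cast_ne_zero.2 d.factorial_ne_zero
  have hsq : ((-1 : ℂ)) ^ d * (-1) ^ d = 1 := by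
    rw [← pow_add, ← two_mul, pow_mul]; norm_num
  rw [h1, h2, pow_add]
  field_simp
  linear_combination (-((j + d + k).choose d : ℂ)) * hsq


/-- ξ^k·L_m^{[k]}(ξz) = ((-1)^m/m!)(ξ^{m+k} ∗ z^m) and
    z^k·L_m^{[k]}(ξz) = ((-1)^m/m!)(ξ^m ∗ z^{m+k}), where ∗ = ∗_{t=1}. -/
theorem glaguerre_eq_astar (k m : ℕ) :
    (xiv 0 : P 1) ^ k * Polynomial.aeval (xiv 0 * zv 0 : P 1) (glaguerre k m) =
      ((-1 : ℂ) ^ m / (m.factorial : ℂ)) • astar 1 ((xiv 0) ^ (m + k)) ((zv 0) ^ m) ∧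
    (zv 0 : P 1) ^ k * Polynomial.aeval (xiv 0 * zv 0 : P 1) (glaguerre k m) =
      ((-1 : ℂ) ^ m / (m.factorial : ℂ)) • astar 1 ((xiv 0) ^ m) ((zv 0) ^ (m + k)) := by
  have hmin1 : min (m + k) m = m := by omega
  have hmin2 : min m (m + k) = m := by omega
  constructor
  · rw [glaguerre, map_sum, astar_pow, hmin1, Finset.smul_sum, Finset.mul_sum]
    rw [← Finset.sum_range_reflect (fun c =>
      ((-1 : ℂ) ^ m / (m.factorial : ℂ)) •
        (((-1 : ℂ) ^ c / (c.factorial : ℂ) * ((m + k).descFactorial c : ℂ) *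
          (m.descFactorial c : ℂ)) • ((xiv 0 : P 1) ^ (m + k - c) * (zv 0) ^ (m - c)))) (m + 1)]
    refine Finset.sum_congr rfl fun j hj => ?_
    simp only [Finset.mem_range, Nat.lt_succ_iff] at hj
    obtain ⟨d, rfl⟩ : ∃ d, m = j + d := ⟨m - j, by omega⟩
    have e1 : j + d + 1 - 1 - j = d := by omega
    have e2 : j + d - j = d := by omega
    have e3 : j + d + k - d = j + k := by omega
    have e4 : j + d - d = j := by omega
    rw [e1]
    simp only [map_mul, map_pow, Polynomial.aeval_C, Polynomial.aeval_X, e2, e3, e4]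
    rw [smul_smul, MvPolynomial.algebraMap_eq, ← smul_eq_C_mul, mul_smul_comm]
    have hmono : (xiv 0 : P 1) ^ k * (xiv 0 * zv 0) ^ j = xiv 0 ^ (j + k) * zv 0 ^ j := by
      rw [mul_pow]; ring
    rw [hmono]
    congr 1
    rw [scalar_key j d k]
  · rw [glaguerre, map_sum, astar_pow, hmin2, Finset.smul_sum, Finset.mul_sum]
    rw [← Finset.sum_range_reflect (fun c =>
      ((-1 : ℂ) ^ m / (m.factorial : ℂ)) •
        (((-1 : ℂ) ^ c / (c.factorial : ℂ) * (m.descFactorial c : ℂ) *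
          ((m + k).descFactorial c : ℂ)) • ((xiv 0 : P 1) ^ (m - c) * (zv 0) ^ (m + k - c)))) (m + 1)]
    refine Finset.sum_congr rfl fun j hj => ?_
    simp only [Finset.mem_range, Nat.lt_succ_iff] at hj
    obtain ⟨d, rfl⟩ : ∃ d, m = j + d := ⟨m - j, by omega⟩
    have e1 : j + d + 1 - 1 - j = d := by omega
    have e2 : j + d - j = d := by omega
    have e3 : j + d + k - d = j + k := by omega
    have e4 : j + d - d = j := by omega
    rw [e1]
    simp only [map_mul, map_pow, Polynomial.aeval_C, Polynomial.aeval_X, e2, e3, e4]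
    rw [smul_smul, MvPolynomial.algebraMap_eq, ← smul_eq_C_mul, mul_smul_comm]
    have hmono : (zv 0 : P 1) ^ k * (xiv 0 * zv 0) ^ j = xiv 0 ^ j * zv 0 ^ (j + k) := by
      rw [mul_pow]; ring
    rw [hmono, scalar_key j d k]
    congr 1
    ring
end
end
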